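/- Let T be a desingularized operator for L with lc_∂(T) = a·g, a ∈ R, g ∈ R[x] primitive. If T ∈ M_k for some k ∈ ℕ, then cont(L) = (R[x][∂]·M_k) : a^∞, i.e., the contraction ideal equals the saturation of the left ideal generated by M_k with respect to the constant a. -/

import Mathlib

open Polynomial

noncomputable section

/-- `Q_R(x)`, the field of rational functions over the fraction field `Q_R` of `R`,
realized as the fraction field of `R[x]`. -/
abbrev QX (R : Type) [CommRing R] [IsDomain R] := FractionRing (Polynomial R)

/-- Data of an Ore algebra `R[x][∂; σ, δ] ⊆ Q_R(x)[∂; σ, δ]`.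
The ring `A` plays the role of `Q_R(x)[∂]`; `ι` embeds the coefficient field,
`D` is the Ore variable `∂`, subject to the commutation rule `∂·p = σ(p)·∂ + δ(p)`,
and every element of `A` has a unique finite coefficient expansion `Σ ι(cᵢ)·∂^i`. -/
structure OreAlg (R : Type) [CommRing R] [IsDomain R] (A : Type) [Ring A] where
  σ : Polynomial R ≃+* Polynomial R
  σ_fix : ∀ r : R, σ (C r) = C r
  δ : Polynomial R → Polynomial R
  δ_add : ∀ f g, δ (f + g) = δ f + δ g
  δ_linear : ∀ (r : R) (f), δ (C r * f) = C r * δ f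
  ι : QX R →+* A
  ι_inj : Function.Injective ι
  D : A
  comm_rule : ∀ p : Polynomial R,
    D * ι (algebraMap (Polynomial R) (QX R) p)
      = ι (algebraMap (Polynomial R) (QX R) (σ p)) * D
        + ι (algebraMap (Polynomial R) (QX R) (δ p))
  δ_leibniz : ∀ f g, δ (f * g) = σ f * δ g + δ f * g
  coeff : A → ℕ → QX R
  coeff_inj : ∀ P Q : A, (∀ i, coeff P i = coeff Q i) → P = Q
  coeff_add : ∀ P Q i, coeff (P + Q) i = coeff P i + coeff Q i
  coeff_smul : ∀ (f : QX R) (P : A) (i), coeff (ι f * P) i = f * coeff P i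
  coeff_bdd : ∀ P : A, ∃ N, ∀ i, N < i → coeff P i = 0
  coeff_mk : ∀ (N : ℕ) (c : ℕ → QX R), (∀ i, N < i → c i = 0) →
    ∀ j, coeff (∑ i ∈ Finset.range (N + 1), ι (c i) * D ^ i) j = c j

namespace OreAlg

variable {R : Type} [CommRing R] [IsDomain R] {A : Type} [Ring A] (O : OreAlg R A)

/-- The embedding of `R[x]` into the Ore algebra. -/
def ιp (f : Polynomial R) : A := O.ι (algebraMap (Polynomial R) (QX R) f)

/-- The `i`-th `∂`-coefficient of `P` lies in `R[x]`. -/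
def PolyCoeff (P : A) (i : ℕ) : Prop :=
  ∃ f : Polynomial R, O.coeff P i = algebraMap (Polynomial R) (QX R) f

/-- `P` belongs to the subring `R[x][∂]` of `Q_R(x)[∂]`. -/
def InB (P : A) : Prop := ∀ i, O.PolyCoeff P i

/-- The order (degree in `∂`) of an operator. -/
def ord (P : A) : ℕ := sSup {i | O.coeff P i ≠ 0}

/-- The leading coefficient (with respect to `∂`), in `Q_R(x)`. -/
def lc (P : A) : QX R := O.coeff P (O.ord P)

/-- The contraction ideal `cont(L) = Q_R(x)[∂]·L ∩ R[x][∂]`. -/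
def cont (L : A) : Set A := {P | O.InB P ∧ ∃ Q : A, P = Q * L}

/-- The `k`-th submodule `M_k(L) = {P ∈ cont(L) : deg_∂ P ≤ k}`. -/
def M (L : A) (k : ℕ) : Set A := {P | P ∈ O.cont L ∧ O.ord P ≤ k}

/-- The `k`-th coefficient ideal `I_k = {[∂^k]P : P ∈ M_k} ∪ {0}` (as a set of
polynomials; `0` arises from `P = 0`). -/
def Icoeff (L : A) (k : ℕ) : Set (Polynomial R) :=
  {f | ∃ P ∈ O.M L k, O.coeff P k = algebraMap (Polynomial R) (QX R) f}

end OreAlg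

/-- `gcd(p, w) = 1` in `R[x]`: every common divisor is a unit. -/
def Copr {R : Type} [CommRing R] (p w : Polynomial R) : Prop :=
  ∀ d : Polynomial R, d ∣ p → d ∣ w → IsUnit d

namespace OreAlg

variable {R : Type} [CommRing R] [IsDomain R] {A : Type} [Ring A] (O : OreAlg R A)

/-- `P` is a `p`-removing operator for `L` over `R[x]`, of order `k`:
`P·L ∈ R[x][∂]` and `σ^{-k}(lc_∂(P·L)) = (w/(v·p))·lc_∂(L)` with `gcd(p, w) = 1`. -/
def IsRemoving (L : A) (p : Polynomial R) (k : ℕ) (P : A) : Prop :=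
  O.ord P = k ∧ O.InB (P * L) ∧
  ∃ w v t l : Polynomial R, v ≠ 0 ∧ Copr p w ∧
    O.lc (P * L) = algebraMap (Polynomial R) (QX R) t ∧
    O.lc L = algebraMap (Polynomial R) (QX R) l ∧
    (⇑O.σ.symm)^[k] t * (v * p) = w * l

/-- `p` is removable from `L` (at some order). -/
def Removable (L : A) (p : Polynomial R) : Prop :=
  ∃ k P, O.IsRemoving L p k P

/-- Factorization data for `lc_∂(L) = c·p₁^{e₁}⋯p_m^{e_m}`, with `c ∈ R` and the
`pᵢ ∈ R[x] \ R` irreducible and pairwise coprime; `L` has order `r > 0`. -/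
def Factored (L : A) (r m : ℕ) (c : R) (p : Fin m → Polynomial R)
    (e : Fin m → ℕ) : Prop :=
  O.ord L = r ∧ 0 < r ∧ c ≠ 0 ∧
  O.lc L = algebraMap (Polynomial R) (QX R) (C c * ∏ i, p i ^ e i) ∧
  (∀ i, Irreducible (p i) ∧ 0 < (p i).natDegree) ∧
  (∀ i j, i ≠ j → Copr (p i) (p j))

/-- `T` is a desingularized operator for `L`: `T ∈ cont(L)` and
`σ^{r-k}(lc_∂(T)) = (a/(b·∏ pᵢ^{kᵢ}))·lc_∂(L)` with `a, b ∈ R`, where each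
`pᵢ^{dᵢ}` with `dᵢ > kᵢ` is non-removable from `L`. -/
def Desing (L : A) (r m : ℕ) (c : R) (p : Fin m → Polynomial R)
    (e : Fin m → ℕ) (T : A) : Prop :=
  T ∈ O.cont L ∧ r ≤ O.ord T ∧
  ∃ (a b : R) (k : Fin m → ℕ) (t l : Polynomial R),
    b ≠ 0 ∧ (∀ i, k i ≤ e i) ∧
    O.lc T = algebraMap (Polynomial R) (QX R) t ∧
    O.lc L = algebraMap (Polynomial R) (QX R) l ∧
    (⇑O.σ.symm)^[O.ord T - r] t * (C b * ∏ i, p i ^ k i) = C a * l ∧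
    (∀ i (d : ℕ), k i < d → ¬ O.Removable L (p i ^ d))

/-- The left ideal of `R[x][∂]` generated by a set `S ⊆ R[x][∂]`. -/
def LIdeal (S : Set A) : Set A :=
  {P | ∃ (n : ℕ) (co s : Fin n → A), (∀ i, O.InB (co i)) ∧ (∀ i, s i ∈ S) ∧
    P = ∑ i, co i * s i}

/-- The constant `a ∈ R` viewed inside the Ore algebra. -/
def cst (a : R) : A := O.ιp (C a)

/-- The saturation `I : a^∞ = {P ∈ R[x][∂] : aⁱ·P ∈ I for some i}`. -/
def sat (I : Set A) (a : R) : Set A :=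
  {P | O.InB P ∧ ∃ i : ℕ, O.cst a ^ i * P ∈ I}

end OreAlg

section AuxGeneric

/-- In a `CancelCommMonoidWithZero`, if `p` is prime, `p^(κ+1) ∤ x` and `p^e ∣ x*y`
then `p^(e-κ) ∣ y`. -/
theorem pow_dvd_aux {α : Type*} [CommMonoidWithZero α] [IsCancelMulZero α] {p : α} (hp : Prime p) :
    ∀ (κ : ℕ) {x y : α} (e : ℕ), ¬ p ^ (κ + 1) ∣ x → p ^ e ∣ x * y → p ^ (e - κ) ∣ y := by
  intro κ
  induction κ with
  | zero =>
    intro x y e h1 h2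
    rw [pow_one] at h1
    simpa using hp.pow_dvd_of_dvd_mul_left e h1 h2
  | succ κ ih =>
    intro x y e h1 h2
    by_cases hpA : p ∣ x
    · obtain ⟨x1, rfl⟩ := hpA
      have h1' : ¬ p ^ (κ + 1) ∣ x1 := fun hc => h1 (by
        rw [pow_succ']
        exact mul_dvd_mul_left p hc)
      rcases Nat.eq_zero_or_pos e with he | he
      · subst he; simpa using one_dvd y
      · obtain ⟨e', rfl⟩ : ∃ e', e = e' + 1 := ⟨e - 1, by omega⟩
        have h2' : p ^ e' ∣ x1 * y := by
          have hstep : p * p ^ e' ∣ p * (x1 * y) := by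
            rw [← pow_succ']
            rw [mul_assoc] at h2
            exact h2
          exact (mul_dvd_mul_iff_left hp.ne_zero).mp hstep
        have := ih e' h1' h2'
        rwa [show e' - κ = e' + 1 - (κ + 1) by omega] at this
    · have hy : p ^ e ∣ y := hp.pow_dvd_of_dvd_mul_left e hpA h2
      exact dvd_trans (pow_dvd_pow p (by omega)) hy

theorem prod_dvd_aux {α : Type*} [CommMonoidWithZero α] [IsCancelMulZero α] [DecompositionMonoid α]
    {ι' : Type*} (s : Finset ι') (f : ι' → α) :
    ∀ z : α, (∀ i ∈ s, ∀ j ∈ s, i ≠ j → IsRelPrime (f i) (f j)) →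
      (∀ i ∈ s, f i ∣ z) → (∏ i ∈ s, f i) ∣ z := by
  classical
  induction s using Finset.induction_on with
  | empty => intro z _ _; simpa using one_dvd z
  | @insert x s hx ih =>
    intro z hrel hdvd
    rw [Finset.prod_insert hx]
    refine IsRelPrime.mul_dvd ?_ (hdvd x (Finset.mem_insert_self x s)) (ih z ?_ ?_)
    · exact IsRelPrime.prod_right fun j hj =>
        hrel x (Finset.mem_insert_self x s) j (Finset.mem_insert_of_mem hj)
          (by rintro rfl; exact hx hj)
    · exact fun i hi j hj hij =>
        hrel i (Finset.mem_insert_of_mem hi) j (Finset.mem_insert_of_mem hj) hij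
    · exact fun i hi => hdvd i (Finset.mem_insert_of_mem hi)

open Polynomial in
theorem isPrimitive_of_irr {R : Type} [CommRing R] [IsDomain R] {p : Polynomial R}
    (hp : Irreducible p) (hd : 0 < p.natDegree) : p.IsPrimitive := by
  intro r hr
  obtain ⟨q, hq⟩ := hr
  rcases hp.isUnit_or_isUnit hq with h | h
  · exact isUnit_C.mp h
  · exfalso
    have h1 : p.natDegree ≤ (C r).natDegree + q.natDegree := hq ▸ natDegree_mul_le
    rw [natDegree_C, Polynomial.natDegree_eq_zero_of_isUnit h] at h1
    omega

open Polynomial in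
theorem isPrimitive_pow {R : Type} [CommRing R] [IsDomain R] [NormalizedGCDMonoid R]
    {p : Polynomial R} (hp : p.IsPrimitive) (n : ℕ) : (p ^ n).IsPrimitive := by
  induction n with
  | zero => simpa using isPrimitive_one
  | succ n ih => rw [pow_succ]; exact ih.mul hp

open Polynomial in
theorem isPrimitive_prod {R : Type} [CommRing R] [IsDomain R] [NormalizedGCDMonoid R]
    {ι' : Type*} (s : Finset ι') (f : ι' → Polynomial R)
    (h : ∀ i ∈ s, (f i).IsPrimitive) : (∏ i ∈ s, f i).IsPrimitive := by
  classical
  induction s using Finset.induction_on with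
  | empty => simpa using isPrimitive_one
  | @insert x s hx ih =>
    rw [Finset.prod_insert hx]
    exact (h x (Finset.mem_insert_self x s)).mul
      (ih fun i hi => h i (Finset.mem_insert_of_mem hi))

end AuxGeneric

namespace OreAlg

variable {R : Type} [CommRing R] [IsDomain R] {A : Type} [Ring A] (O : OreAlg R A)

local notation "φ" => algebraMap (Polynomial R) (QX R)

lemma phi_inj (_O : OreAlg R A) :
    Function.Injective (algebraMap (Polynomial R) (QX R)) :=
  IsFractionRing.injective _ _

lemma coeff_zero' (i : ℕ) : O.coeff 0 i = 0 := by
  have h := O.coeff_add 0 0 i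
  rw [add_zero] at h
  exact left_eq_add.mp h

lemma coeff_sub (P Q : A) (i : ℕ) : O.coeff (P - Q) i = O.coeff P i - O.coeff Q i := by
  have h := O.coeff_add (P - Q) Q i
  rw [sub_add_cancel] at h
  rw [h]; ring

lemma eq_zero_of_coeff (P : A) (h : ∀ i, O.coeff P i = 0) : P = 0 :=
  O.coeff_inj P 0 fun i => by rw [h, O.coeff_zero']

lemma bddAbove_supp (P : A) : BddAbove {i | O.coeff P i ≠ 0} := by
  obtain ⟨N, hN⟩ := O.coeff_bdd P
  exact ⟨N, fun x hx => by by_contra hc; exact hx (hN x (lt_of_not_ge hc))⟩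

lemma coeff_ord_ne {P : A} (hP : P ≠ 0) : O.coeff P (O.ord P) ≠ 0 := by
  rcases Set.eq_empty_or_nonempty {i | O.coeff P i ≠ 0} with he | hne
  · exfalso
    exact hP (O.eq_zero_of_coeff P fun i => by
      by_contra hc
      exact absurd (he ▸ hc : i ∈ (∅ : Set ℕ)) (Set.notMem_empty i))
  · exact Nat.sSup_mem hne (O.bddAbove_supp P)

lemma coeff_eq_zero_of_lt (P : A) {j : ℕ} (hj : O.ord P < j) : O.coeff P j = 0 := by
  by_contra hc
  exact absurd (le_csSup (O.bddAbove_supp P) (show j ∈ {i | O.coeff P i ≠ 0} from hc))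
    (not_le.mpr hj)

lemma ord_le (P : A) {c : ℕ} (h : ∀ j, c < j → O.coeff P j = 0) : O.ord P ≤ c := by
  rcases Set.eq_empty_or_nonempty {i | O.coeff P i ≠ 0} with he | hne
  · show sSup _ ≤ c
    rw [he, csSup_empty]
    exact bot_le
  · exact csSup_le hne fun b hb => not_lt.mp fun hlt => hb (h b hlt)

lemma ord_eq (P : A) {j0 : ℕ} (h1 : O.coeff P j0 ≠ 0)
    (h2 : ∀ j, j0 < j → O.coeff P j = 0) : O.ord P = j0 :=
  le_antisymm (O.ord_le P h2) (le_csSup (O.bddAbove_supp P) h1)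

lemma ord_zero : O.ord (0 : A) = 0 := by
  have he : {i | O.coeff (0 : A) i ≠ 0} = ∅ := by
    ext i; simp [O.coeff_zero']
  show sSup _ = 0
  rw [he, csSup_empty]
  rfl

lemma expand (P : A) (N : ℕ) (hN : ∀ i, N < i → O.coeff P i = 0) :
    P = ∑ i ∈ Finset.range (N + 1), O.ι (O.coeff P i) * O.D ^ i :=
  O.coeff_inj _ _ fun j => (O.coeff_mk N _ hN j).symm

lemma coeff_sum {ι' : Type*} (s : Finset ι') (F : ι' → A) (j : ℕ) :
    O.coeff (∑ i ∈ s, F i) j = ∑ i ∈ s, O.coeff (F i) j := by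
  classical
  induction s using Finset.induction_on with
  | empty => simp [O.coeff_zero']
  | @insert x s hx ih => rw [Finset.sum_insert hx, Finset.sum_insert hx, O.coeff_add, ih]

lemma coeff_monomial (f : QX R) (m j : ℕ) :
    O.coeff (O.ι f * O.D ^ m) j = if j = m then f else 0 := by
  have hc : ∀ i, m < i → (if i = m then f else 0) = 0 := fun i hi => if_neg (by omega)
  have key : (∑ i ∈ Finset.range (m + 1), O.ι (if i = m then f else 0) * O.D ^ i)
      = O.ι f * O.D ^ m := by
    rw [Finset.sum_range_succ, if_pos rfl, Finset.sum_eq_zero, zero_add]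
    intro i hi
    rw [if_neg (by have := Finset.mem_range.mp hi; omega), map_zero, zero_mul]
  rw [← key]
  exact O.coeff_mk m _ hc j

lemma InB_monomial (f : Polynomial R) (m : ℕ) : O.InB (O.ι (φ f) * O.D ^ m) := fun i =>
  ⟨if i = m then f else 0, by rw [O.coeff_monomial]; split <;> simp⟩

lemma InB_one : O.InB 1 := by
  have h := O.InB_monomial 1 0
  rwa [map_one, map_one, pow_zero, mul_one] at h

lemma ord_smul {f : QX R} (hf : f ≠ 0) (P : A) : O.ord (O.ι f * P) = O.ord P := by
  show sSup _ = sSup _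
  congr 1
  ext j
  simp [O.coeff_smul, hf]

lemma cst_pow' (a : R) (i : ℕ) : O.cst a ^ i = O.ι ((φ (C a)) ^ i) :=
  (map_pow O.ι _ i).symm

lemma cst_pow (a : R) (i : ℕ) : O.cst a ^ i = O.ι (φ (C (a ^ i))) := by
  rw [O.cst_pow', ← map_pow, ← C_pow]

end OreAlg

namespace OreAlg

variable {R : Type} [CommRing R] [IsDomain R] {A : Type} [Ring A] (O : OreAlg R A)

local notation "φ" => algebraMap (Polynomial R) (QX R)

lemma it_mul (m : ℕ) (f g : Polynomial R) :
    (⇑O.σ)^[m] (f * g) = (⇑O.σ)^[m] f * (⇑O.σ)^[m] g := by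
  induction m generalizing f g with
  | zero => simp
  | succ m ih =>
    rw [Function.iterate_succ_apply, Function.iterate_succ_apply,
      Function.iterate_succ_apply, map_mul, ih]

lemma symm_it_mul (m : ℕ) (f g : Polynomial R) :
    (⇑O.σ.symm)^[m] (f * g) = (⇑O.σ.symm)^[m] f * (⇑O.σ.symm)^[m] g := by
  induction m generalizing f g with
  | zero => simp
  | succ m ih =>
    rw [Function.iterate_succ_apply, Function.iterate_succ_apply,
      Function.iterate_succ_apply, map_mul, ih]

lemma it_C (m : ℕ) (r : R) : (⇑O.σ)^[m] (C r) = C r := by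
  induction m with
  | zero => simp
  | succ m ih => rw [Function.iterate_succ_apply, O.σ_fix, ih]

lemma symm_fix (r : R) : O.σ.symm (C r) = C r :=
  O.σ.symm_apply_eq.mpr (O.σ_fix r).symm

lemma symm_it_C (m : ℕ) (r : R) : (⇑O.σ.symm)^[m] (C r) = C r := by
  induction m with
  | zero => simp
  | succ m ih => rw [Function.iterate_succ_apply, O.symm_fix, ih]

lemma it_symm_it (m : ℕ) (x : Polynomial R) : (⇑O.σ)^[m] ((⇑O.σ.symm)^[m] x) = x :=
  (Function.LeftInverse.iterate (fun y => O.σ.apply_symm_apply y) m) x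

lemma symm_it_it (m : ℕ) (x : Polynomial R) : (⇑O.σ.symm)^[m] ((⇑O.σ)^[m] x) = x :=
  (Function.LeftInverse.iterate (fun y => O.σ.symm_apply_apply y) m) x

lemma it_zero (m : ℕ) : (⇑O.σ)^[m] (0 : Polynomial R) = 0 := by
  rw [← Polynomial.C_0, O.it_C]

lemma symm_it_zero (m : ℕ) : (⇑O.σ.symm)^[m] (0 : Polynomial R) = 0 := by
  rw [← Polynomial.C_0, O.symm_it_C]

lemma it_ne_zero (m : ℕ) {x : Polynomial R} (hx : x ≠ 0) : (⇑O.σ)^[m] x ≠ 0 := by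
  intro h
  apply hx
  have := congrArg ((⇑O.σ.symm)^[m]) h
  rwa [O.symm_it_it, O.symm_it_zero] at this

lemma symm_it_ne_zero (m : ℕ) {x : Polynomial R} (hx : x ≠ 0) : (⇑O.σ.symm)^[m] x ≠ 0 := by
  intro h
  apply hx
  have := congrArg ((⇑O.σ)^[m]) h
  rwa [O.it_symm_it, O.it_zero] at this

lemma it_dvd (m : ℕ) {x y : Polynomial R} (h : x ∣ y) : (⇑O.σ)^[m] x ∣ (⇑O.σ)^[m] y := by
  obtain ⟨z, rfl⟩ := h
  exact ⟨(⇑O.σ)^[m] z, O.it_mul m x z⟩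

lemma prim_symm_it {g : Polynomial R} (hg : g.IsPrimitive) (m : ℕ) :
    ((⇑O.σ.symm)^[m] g).IsPrimitive := by
  intro r hr
  apply hg r
  have := O.it_dvd m hr
  rwa [O.it_C, O.it_symm_it] at this

lemma delta_zero : O.δ (0 : Polynomial R) = 0 := by
  have h := O.δ_add 0 0
  rw [add_zero] at h
  exact left_eq_add.mp h

/-- One multiplication by `D` on the left of an element of `R[x][∂]`. -/
lemma D_step {P : A} (hP : O.InB P) {n : ℕ} (hn : ∀ j, n < j → O.coeff P j = 0) :
    O.InB (O.D * P) ∧ (∀ j, n + 1 < j → O.coeff (O.D * P) j = 0) ∧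
      ∀ f : Polynomial R, O.coeff P n = φ f → O.coeff (O.D * P) (n + 1) = φ (O.σ f) := by
  choose g hg using hP
  have hg0 : ∀ i, n < i → g i = 0 := fun i hi =>
    O.phi_inj (by rw [← hg i, hn i hi, map_zero])
  have hczero : ∀ i, n + 1 < i →
      φ (O.δ (g i) + if i = 0 then 0 else O.σ (g (i - 1))) = 0 := by
    intro i hi
    have h1 : g i = 0 := hg0 i (by omega)
    have h2 : g (i - 1) = 0 := hg0 _ (by omega)
    have h3 : i ≠ 0 := by omega
    simp [h1, h2, h3, O.delta_zero]
  have key : O.D * P = ∑ j ∈ Finset.range (n + 2),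
      O.ι (φ (O.δ (g j) + if j = 0 then 0 else O.σ (g (j - 1)))) * O.D ^ j := by
    conv_lhs => rw [O.expand P n hn]
    rw [Finset.mul_sum]
    have step : ∀ i, O.D * (O.ι (O.coeff P i) * O.D ^ i)
        = O.ι (φ (O.σ (g i))) * O.D ^ (i + 1) + O.ι (φ (O.δ (g i))) * O.D ^ i := by
      intro i
      rw [hg i, ← mul_assoc, O.comm_rule, add_mul, mul_assoc, ← pow_succ']
    rw [Finset.sum_congr rfl fun i _ => step i, Finset.sum_add_distrib]
    have lhs1 : (∑ i ∈ Finset.range (n + 1), O.ι (φ (O.σ (g i))) * O.D ^ (i + 1))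
        = ∑ j ∈ Finset.range (n + 2),
            (if j = 0 then 0 else O.ι (φ (O.σ (g (j - 1)))) * O.D ^ j) := by
      rw [Finset.sum_range_succ'
        (fun j => if j = 0 then 0 else O.ι (φ (O.σ (g (j - 1)))) * O.D ^ j) (n + 1)]
      simp
    have lhs2 : (∑ i ∈ Finset.range (n + 1), O.ι (φ (O.δ (g i))) * O.D ^ i)
        = ∑ j ∈ Finset.range (n + 2), O.ι (φ (O.δ (g j))) * O.D ^ j := by
      rw [Finset.sum_range_succ (fun j => O.ι (φ (O.δ (g j))) * O.D ^ j) (n + 1),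
        hg0 (n + 1) (by omega), O.delta_zero, map_zero, map_zero, zero_mul, add_zero]
    rw [lhs1, lhs2, ← Finset.sum_add_distrib]
    refine Finset.sum_congr rfl fun j _ => ?_
    rcases eq_or_ne j 0 with hj | hj
    · subst hj
      simp
    · rw [if_neg hj, if_neg hj, map_add, map_add, add_mul, add_comm]
  have hco : ∀ j, O.coeff (O.D * P) j
      = φ (O.δ (g j) + if j = 0 then 0 else O.σ (g (j - 1))) := by
    intro j
    rw [key]
    exact O.coeff_mk (n + 1) _ hczero j
  refine ⟨fun j => ⟨_, hco j⟩, fun j hj => by rw [hco j]; exact hczero j hj, fun f hf => ?_⟩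
  have hgf : g n = f := O.phi_inj (by rw [← hg n, hf])
  rw [hco (n + 1)]
  have hgn1 : g (n + 1) = 0 := hg0 _ (by omega)
  simp [hgn1, O.delta_zero, hgf]

lemma D_pow {P : A} (hP : O.InB P) {n : ℕ} (hn : ∀ j, n < j → O.coeff P j = 0)
    {f : Polynomial R} (hf : O.coeff P n = φ f) (m : ℕ) :
    O.InB (O.D ^ m * P) ∧ (∀ j, n + m < j → O.coeff (O.D ^ m * P) j = 0) ∧
      O.coeff (O.D ^ m * P) (n + m) = φ ((⇑O.σ)^[m] f) := by
  induction m with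
  | zero =>
    rw [pow_zero, one_mul]
    exact ⟨hP, fun j hj => hn j (by omega), by simpa using hf⟩
  | succ m ih =>
    obtain ⟨ih1, ih2, ih3⟩ := ih
    have hmul : O.D ^ (m + 1) * P = O.D * (O.D ^ m * P) := by rw [pow_succ', mul_assoc]
    obtain ⟨s1, s2, s3⟩ := O.D_step ih1 ih2
    refine ⟨by rwa [hmul], fun j hj => by rw [hmul]; exact s2 j (by omega), ?_⟩
    rw [hmul, show n + (m + 1) = (n + m) + 1 by omega, Function.iterate_succ_apply']
    exact s3 _ ih3

lemma mul_top {Q P : A} (hQ : O.InB Q) (hP : O.InB P) {nq n : ℕ}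
    (hnq : ∀ j, nq < j → O.coeff Q j = 0) (hn : ∀ j, n < j → O.coeff P j = 0)
    {q f : Polynomial R} (hq : O.coeff Q nq = φ q) (hf : O.coeff P n = φ f) :
    (∀ j, nq + n < j → O.coeff (Q * P) j = 0) ∧
      O.coeff (Q * P) (nq + n) = φ (q * (⇑O.σ)^[nq] f) := by
  choose g hg using hQ
  have key : Q * P = ∑ i ∈ Finset.range (nq + 1), O.ι (φ (g i)) * (O.D ^ i * P) := by
    conv_lhs => rw [O.expand Q nq hnq]
    rw [Finset.sum_mul]
    exact Finset.sum_congr rfl fun i _ => by rw [hg i, mul_assoc]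
  have hcoeff : ∀ j, O.coeff (Q * P) j
      = ∑ i ∈ Finset.range (nq + 1), φ (g i) * O.coeff (O.D ^ i * P) j := by
    intro j
    rw [key, O.coeff_sum]
    exact Finset.sum_congr rfl fun i _ => O.coeff_smul _ _ j
  constructor
  · intro j hj
    rw [hcoeff]
    refine Finset.sum_eq_zero fun i hi => ?_
    have hz := (O.D_pow hP hn hf i).2.1 j (by have := Finset.mem_range.mp hi; omega)
    rw [hz, mul_zero]
  · rw [hcoeff, Finset.sum_eq_single nq]
    · have hgq : g nq = q := O.phi_inj (by rw [← hg nq, hq])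
      rw [show nq + n = n + nq by omega, (O.D_pow hP hn hf nq).2.2, hgq, ← map_mul]
    · intro i hi hne
      have hi' := Finset.mem_range.mp hi
      have hz := (O.D_pow hP hn hf i).2.1 (nq + n) (by omega)
      rw [hz, mul_zero]
    · intro h
      exact absurd (Finset.self_mem_range_succ nq) h

lemma LIdeal_single {S : Set A} {co s : A} (hco : O.InB co) (hs : s ∈ S) :
    co * s ∈ O.LIdeal S :=
  ⟨1, fun _ => co, fun _ => s, fun _ => hco, fun _ => hs, by rw [Fin.sum_univ_one]⟩

lemma LIdeal_add {S : Set A} {P1 P2 : A} (h1 : P1 ∈ O.LIdeal S) (h2 : P2 ∈ O.LIdeal S) :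
    P1 + P2 ∈ O.LIdeal S := by
  obtain ⟨n1, co1, s1, hco1, hs1, rfl⟩ := h1
  obtain ⟨n2, co2, s2, hco2, hs2, rfl⟩ := h2
  refine ⟨n1 + n2, Fin.append co1 co2, Fin.append s1 s2, ?_, ?_, ?_⟩
  · intro i
    refine Fin.addCases (fun i => ?_) (fun i => ?_) i
    · rw [Fin.append_left]; exact hco1 i
    · rw [Fin.append_right]; exact hco2 i
  · intro i
    refine Fin.addCases (fun i => ?_) (fun i => ?_) i
    · rw [Fin.append_left]; exact hs1 i
    · rw [Fin.append_right]; exact hs2 i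
  · rw [Fin.sum_univ_add]
    congr 1
    · exact Finset.sum_congr rfl fun i _ => by rw [Fin.append_left, Fin.append_left]
    · exact Finset.sum_congr rfl fun i _ => by rw [Fin.append_right, Fin.append_right]

lemma LIdeal_smul {S : Set A} (f : Polynomial R) {P : A} (h : P ∈ O.LIdeal S) :
    O.ι (φ f) * P ∈ O.LIdeal S := by
  obtain ⟨n, co, s, hco, hs, rfl⟩ := h
  refine ⟨n, fun i => O.ι (φ f) * co i, s, ?_, hs, ?_⟩
  · intro i j
    obtain ⟨w, hw⟩ := hco i j
    exact ⟨f * w, by rw [O.coeff_smul, hw, ← map_mul]⟩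
  · rw [Finset.mul_sum]
    exact Finset.sum_congr rfl fun i _ => (mul_assoc _ _ _).symm

end OreAlg


/-- if `T` is a desingularized operator with `lc_∂(T) = a·g`
(`a ∈ R`, `g` primitive) and `T ∈ M_k`, then
`cont(L) = (R[x][∂]·M_k) : a^∞`. -/
theorem contraction_eq_saturation {R : Type} [CommRing R] [IsDomain R]
    [IsPrincipalIdealRing R] {A : Type} [Ring A] (O : OreAlg R A)
    (L : A) (hL : L ≠ 0) (hLB : O.InB L)
    (r m : ℕ) (c : R) (p : Fin m → Polynomial R) (e : Fin m → ℕ)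
    (hF : O.Factored L r m c p e)
    (T : A) (hT : O.Desing L r m c p e T)
    (a : R) (g : Polynomial R) (hg : g.IsPrimitive)
    (hlcT : O.lc T = algebraMap (Polynomial R) (QX R) (C a * g))
    (k : ℕ) (hTk : T ∈ O.M L k) :
    O.cont L = O.sat (O.LIdeal (O.M L k)) a := by
  classical
  letI : StrongNormalizationMonoid R := UniqueFactorizationMonoid.normalizationMonoid
  letI : StrongNormalizedGCDMonoid R := UniqueFactorizationMonoid.toStrongNormalizedGCDMonoid R
  have hφinj : Function.Injective (algebraMap (Polynomial R) (QX R)) :=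
    IsFractionRing.injective _ _
  set φ := algebraMap (Polynomial R) (QX R) with hφ
  obtain ⟨hordL, hrpos, hc0, hlcL, hirr, hcopr⟩ := hF
  obtain ⟨hTcont, hrT, a', b, kk, t', l', hb0, hkle, hlcT', hlcL', heq, hnonrem⟩ := hT
  set l : Polynomial R := C c * ∏ i, p i ^ e i with hldef
  -- basic facts about L
  have hcoeffL : O.coeff L r = φ l := by
    have h1 : O.coeff L (O.ord L) = φ l := hlcL
    rwa [hordL] at h1
  have hLtop : ∀ j, r < j → O.coeff L j = 0 := fun j hj =>
    O.coeff_eq_zero_of_lt L (by rw [hordL]; exact hj)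
  have hcoeffLne : O.coeff L r ≠ 0 := by
    rw [← hordL]; exact O.coeff_ord_ne hL
  have hl0 : l ≠ 0 := fun h => hcoeffLne (by rw [hcoeffL, h, map_zero])
  -- basic facts about T
  have hTne : T ≠ 0 := by
    intro h
    have h0 : O.ord T = 0 := by rw [h]; exact O.ord_zero
    omega
  have hcoeffT : O.coeff T (O.ord T) = φ (C a * g) := hlcT
  have hTtop : ∀ j, O.ord T < j → O.coeff T j = 0 := fun j hj => O.coeff_eq_zero_of_lt T hj
  have hag0 : C a * g ≠ 0 := fun h => O.coeff_ord_ne hTne (by rw [hcoeffT, h, map_zero])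
  have ha0 : a ≠ 0 := fun h => hag0 (by rw [h, map_zero, zero_mul])
  have ht' : t' = C a * g := hφinj (by rw [← hlcT', hlcT])
  have hl' : l' = l := hφinj (by rw [← hlcL', hlcL])
  -- the unit relation : σ.symm^[ord T - r] g = C u * E
  have hprodsplit : (∏ i, p i ^ e i) = (∏ i, p i ^ kk i) * ∏ i, p i ^ (e i - kk i) := by
    rw [← Finset.prod_mul_distrib]
    exact Finset.prod_congr rfl fun i _ => by rw [← pow_add, Nat.add_sub_cancel' (hkle i)]
  have hpne : ∀ i : Fin m, p i ≠ 0 := fun i => (hirr i).1.ne_zero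
  have hKne : (∏ i, p i ^ kk i) ≠ 0 :=
    Finset.prod_ne_zero_iff.mpr fun i _ => pow_ne_zero _ (hpne i)
  have heq2 : C (a * b) * (⇑O.σ.symm)^[O.ord T - r] g * (∏ i, p i ^ kk i)
      = C (a' * c) * (∏ i, p i ^ (e i - kk i)) * (∏ i, p i ^ kk i) := by
    have h1 : (⇑O.σ.symm)^[O.ord T - r] t' = C a * (⇑O.σ.symm)^[O.ord T - r] g := by
      rw [ht', O.symm_it_mul, O.symm_it_C]
    have h2 := heq
    rw [h1, hl', hldef, hprodsplit] at h2
    rw [C_mul, C_mul]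
    linear_combination h2
  have heq3 : C (a * b) * (⇑O.σ.symm)^[O.ord T - r] g
      = C (a' * c) * (∏ i, p i ^ (e i - kk i)) :=
    mul_right_cancel₀ hKne heq2
  have hGprim : ((⇑O.σ.symm)^[O.ord T - r] g).IsPrimitive := O.prim_symm_it hg _
  have hEprim : (∏ i, p i ^ (e i - kk i)).IsPrimitive :=
    isPrimitive_prod _ _ fun i _ =>
      isPrimitive_pow (isPrimitive_of_irr (hirr i).1 (hirr i).2) _
  have hcontent : normalize (a * b) = normalize (a' * c) := by
    have h1 := congrArg Polynomial.content heq3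
    rwa [content_C_mul, content_C_mul, isPrimitive_iff_content_eq_one.mp hGprim,
      isPrimitive_iff_content_eq_one.mp hEprim, mul_one, mul_one] at h1
  obtain ⟨u, hu⟩ : Associated (a * b) (a' * c) :=
    associated_of_dvd_dvd (normalize_eq_normalize_iff.mp hcontent).1
      (normalize_eq_normalize_iff.mp hcontent).2
  have hab0 : (a * b : R) ≠ 0 := mul_ne_zero ha0 hb0
  have hCab : (C (a * b) : Polynomial R) ≠ 0 := fun h => hab0 (C_eq_zero.mp h)
  have hGE : (⇑O.σ.symm)^[O.ord T - r] g = C (u : R) * (∏ i, p i ^ (e i - kk i)) := by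
    apply mul_left_cancel₀ hCab
    rw [heq3, ← hu, C_mul, C_mul]
    ring
  have hscond : O.ord T ≤ k := hTk.2
  have hrp : ∀ i j : Fin m, i ≠ j → IsRelPrime (p i) (p j) :=
    fun i j hij z hz1 hz2 => hcopr i j hij z hz1 hz2
  -- main saturation induction
  have main : ∀ n : ℕ, ∀ P : A, P ∈ O.cont L → O.ord P ≤ n →
      ∃ i : ℕ, O.cst a ^ i * P ∈ O.LIdeal (O.M L k) := by
    intro n
    induction n with
    | zero =>
      intro P hP h0
      refine ⟨0, ?_⟩
      rw [pow_zero, one_mul]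
      have h1 := O.LIdeal_single O.InB_one
        (show P ∈ O.M L k from ⟨hP, le_trans h0 (Nat.zero_le k)⟩)
      rwa [one_mul] at h1
    | succ n' ih =>
      intro P hP hord
      by_cases hk : O.ord P ≤ k
      · refine ⟨0, ?_⟩
        rw [pow_zero, one_mul]
        have h1 := O.LIdeal_single O.InB_one (show P ∈ O.M L k from ⟨hP, hk⟩)
        rwa [one_mul] at h1
      push_neg at hk
      rcases Nat.lt_or_ge (O.ord P) (n' + 1) with hlt | hge
      · exact ih P hP (by omega)
      have hn : O.ord P = n' + 1 := le_antisymm hord hge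
      obtain ⟨hPB, Q, hPQ⟩ := hP
      have hPne : P ≠ 0 := by
        intro h0
        rw [h0, O.ord_zero] at hn
        omega
      -- clear the denominators of Q
      obtain ⟨Nq, hNq⟩ := O.coeff_bdd Q
      obtain ⟨bden, hbden⟩ := IsLocalization.exist_integer_multiples
        (nonZeroDivisors (Polynomial R)) (Finset.range (Nq + 1)) (fun i => O.coeff Q i)
      have hv0 : (bden : Polynomial R) ≠ 0 := nonZeroDivisors.ne_zero bden.2
      have hφv : φ (bden : Polynomial R) ≠ 0 :=
        fun h => hv0 (hφinj (by rw [h, map_zero]))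
      have hQtB : O.InB (O.ι (φ (bden : Polynomial R)) * Q) := by
        intro i
        rcases le_or_gt i Nq with hi | hi
        · obtain ⟨y, hy⟩ := hbden i (Finset.mem_range.mpr (by omega))
          exact ⟨y, by rw [O.coeff_smul, ← Algebra.smul_def, ← hy]⟩
        · exact ⟨0, by rw [O.coeff_smul, hNq i hi, mul_zero, map_zero]⟩
      have hQne : Q ≠ 0 := fun h => hPne (by rw [hPQ, h, zero_mul])
      have hQtne : O.ι (φ (bden : Polynomial R)) * Q ≠ 0 := by
        intro h
        apply hQne
        apply O.eq_zero_of_coeff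
        intro i
        have h1 : O.coeff (O.ι (φ (bden : Polynomial R)) * Q) i = 0 := by
          rw [h]; exact O.coeff_zero' i
        rw [O.coeff_smul] at h1
        exact (mul_eq_zero.mp h1).resolve_left hφv
      obtain ⟨qt, hqt⟩ := hQtB (O.ord (O.ι (φ (bden : Polynomial R)) * Q))
      have hqtne : qt ≠ 0 := fun h => O.coeff_ord_ne hQtne (by rw [hqt, h, map_zero])
      have hQttop : ∀ j, O.ord (O.ι (φ (bden : Polynomial R)) * Q) < j →
          O.coeff (O.ι (φ (bden : Polynomial R)) * Q) j = 0 :=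
        fun j hj => O.coeff_eq_zero_of_lt _ hj
      obtain ⟨hQLtop, hQLcoeff⟩ := O.mul_top hQtB hLB hQttop hLtop hqt hcoeffL
      set κ := O.ord (O.ι (φ (bden : Polynomial R)) * Q) with hκ
      have hvP : O.ι (φ (bden : Polynomial R)) * P
          = (O.ι (φ (bden : Polynomial R)) * Q) * L := by rw [hPQ, mul_assoc]
      have hordQL : O.ord ((O.ι (φ (bden : Polynomial R)) * Q) * L) = κ + r := by
        refine O.ord_eq _ ?_ hQLtop
        rw [hQLcoeff]
        intro h
        exact (mul_ne_zero hqtne (O.it_ne_zero κ hl0)) (hφinj (by rw [h, map_zero]))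
      have hordP : κ + r = O.ord P := by
        rw [← hordQL, ← hvP, O.ord_smul hφv]
      obtain ⟨t, ht⟩ := hPB (O.ord P)
      have htne : t ≠ 0 := fun h => O.coeff_ord_ne hPne (by rw [ht, h, map_zero])
      have hvt : (bden : Polynomial R) * t = qt * (⇑O.σ)^[κ] l := by
        apply hφinj
        rw [map_mul, ← ht, ← O.coeff_smul, hvP, ← hordP, hQLcoeff]
      have hVt : (⇑O.σ.symm)^[κ] (bden : Polynomial R) * (⇑O.σ.symm)^[κ] t
          = (⇑O.σ.symm)^[κ] qt * l := by
        have h1 := congrArg ((⇑O.σ.symm)^[κ]) hvt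
        rwa [O.symm_it_mul, O.symm_it_mul, O.symm_it_it] at h1
      -- reduce to coprime cofactors
      have hVne : (⇑O.σ.symm)^[κ] (bden : Polynomial R) ≠ 0 := O.symm_it_ne_zero κ hv0
      have hW0ne : (⇑O.σ.symm)^[κ] qt ≠ 0 := O.symm_it_ne_zero κ hqtne
      obtain ⟨V', hV'⟩ := gcd_dvd_left ((⇑O.σ.symm)^[κ] (bden : Polynomial R))
        ((⇑O.σ.symm)^[κ] qt)
      obtain ⟨W', hW'⟩ := gcd_dvd_right ((⇑O.σ.symm)^[κ] (bden : Polynomial R))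
        ((⇑O.σ.symm)^[κ] qt)
      set dgcd := gcd ((⇑O.σ.symm)^[κ] (bden : Polynomial R)) ((⇑O.σ.symm)^[κ] qt)
        with hdgcd
      have hdne : dgcd ≠ 0 := fun h => hVne (by rw [hV', h, zero_mul])
      have hV'ne : V' ≠ 0 := fun h => hVne (by rw [hV', h, mul_zero])
      have hrel : IsRelPrime V' W' := by
        intro z hz1 hz2
        have hdz : dgcd * z ∣ dgcd := by
          apply dvd_gcd
          · rw [hV']; exact mul_dvd_mul_left _ hz1
          · rw [hW']; exact mul_dvd_mul_left _ hz2
        have h1 : z ∣ 1 := (mul_dvd_mul_iff_left hdne).mp (by rw [mul_one]; exact hdz)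
        exact isUnit_of_dvd_one h1
      have hV't1 : V' * (⇑O.σ.symm)^[κ] t = W' * l := by
        apply mul_left_cancel₀ hdne
        calc dgcd * (V' * (⇑O.σ.symm)^[κ] t) = (dgcd * V') * (⇑O.σ.symm)^[κ] t := by ring
        _ = (⇑O.σ.symm)^[κ] (bden : Polynomial R) * (⇑O.σ.symm)^[κ] t := by rw [← hV']
        _ = (⇑O.σ.symm)^[κ] qt * l := hVt
        _ = dgcd * (W' * l) := by rw [hW']; ring
      -- non-removability forces bounded multiplicities in V'
      have hnd : ∀ i : Fin m, ¬ (p i ^ (kk i + 1) ∣ V') := by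
        intro i hdvd
        obtain ⟨v₀, hv₀⟩ := hdvd
        have hv₀ne : v₀ ≠ 0 := fun h => hV'ne (by rw [hv₀, h, mul_zero])
        apply hnonrem i (kk i + 1) (Nat.lt_succ_self _)
        refine ⟨κ, Q, ?_, ?_, W', v₀, t, l, hv₀ne, ?_, ?_, ?_, ?_⟩
        · rw [hκ, O.ord_smul hφv]
        · rw [← hPQ]; exact hPB
        · intro d0 h1 h2
          exact hrel (h1.trans ⟨v₀, hv₀⟩) h2
        · show O.coeff (Q * L) (O.ord (Q * L)) = φ t
          rw [← hPQ]; exact ht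
        · exact hlcL
        · rw [← hV't1, hv₀]; ring
      -- conclude divisibility of the leading coefficient
      have hdvdt1 : ∀ i : Fin m, p i ^ (e i - kk i) ∣ (⇑O.σ.symm)^[κ] t := by
        intro i
        have hprime : Prime (p i) :=
          UniqueFactorizationMonoid.irreducible_iff_prime.mp (hirr i).1
        have h1 : p i ^ (e i) ∣ V' * (⇑O.σ.symm)^[κ] t := by
          rw [hV't1]
          have h2 : p i ^ e i ∣ ∏ j, p j ^ e j :=
            Finset.dvd_prod_of_mem (fun j => p j ^ e j) (Finset.mem_univ i)
          have h3 : p i ^ e i ∣ l := by rw [hldef]; exact h2.mul_left _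
          exact h3.mul_left _
        exact pow_dvd_aux hprime (kk i) (e i) (hnd i) h1
      have hprod : (∏ i, p i ^ (e i - kk i)) ∣ (⇑O.σ.symm)^[κ] t :=
        prod_dvd_aux Finset.univ (fun i => p i ^ (e i - kk i)) _
          (fun i _ j _ hij => (hrp i j hij).pow) (fun i _ => hdvdt1 i)
      obtain ⟨h0, hh0⟩ := hprod
      have ht_top : t = (⇑O.σ)^[κ] (∏ i, p i ^ (e i - kk i)) * (⇑O.σ)^[κ] h0 := by
        have h1 := congrArg ((⇑O.σ)^[κ]) hh0
        rwa [O.it_symm_it, O.it_mul] at h1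
      have hσg : (⇑O.σ)^[O.ord P - O.ord T] g
          = C (u : R) * (⇑O.σ)^[κ] (∏ i, p i ^ (e i - kk i)) := by
        have hgE : g = (⇑O.σ)^[O.ord T - r] (C (u : R) * (∏ i, p i ^ (e i - kk i))) := by
          rw [← hGE, O.it_symm_it]
        rw [hgE, ← Function.iterate_add_apply,
          show (O.ord P - O.ord T) + (O.ord T - r) = κ by omega, O.it_mul, O.it_C]
      have hkey : (C ((u⁻¹ : Rˣ) : R) * (⇑O.σ)^[κ] h0) * (⇑O.σ)^[O.ord P - O.ord T] g
          = t := by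
        rw [hσg, ht_top,
          show (C ((u⁻¹ : Rˣ) : R) * (⇑O.σ)^[κ] h0)
              * (C (u : R) * (⇑O.σ)^[κ] (∏ i, p i ^ (e i - kk i)))
            = (C ((u⁻¹ : Rˣ) : R) * C (u : R))
              * ((⇑O.σ)^[κ] (∏ i, p i ^ (e i - kk i)) * (⇑O.σ)^[κ] h0) by ring,
          ← C_mul, Units.inv_mul, C_1, one_mul]
      -- build P' of smaller order
      obtain ⟨hTB, QT, hTQT⟩ := hTcont
      obtain ⟨hDTB, hDTtop, hDTcoeff⟩ :=
        O.D_pow hTB hTtop hcoeffT (O.ord P - O.ord T)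
      have hadd : O.ord T + (O.ord P - O.ord T) = O.ord P := by omega
      have hDTcoeff' := hadd ▸ hDTcoeff
      have hXcoeff : ∀ j, O.coeff (O.ι (φ (C ((u⁻¹ : Rˣ) : R) * (⇑O.σ)^[κ] h0))
          * (O.D ^ (O.ord P - O.ord T) * T)) j
          = φ (C ((u⁻¹ : Rˣ) : R) * (⇑O.σ)^[κ] h0)
            * O.coeff (O.D ^ (O.ord P - O.ord T) * T) j :=
        fun j => O.coeff_smul _ _ j
      have hXtop : ∀ j, O.ord P < j → O.coeff (O.ι (φ (C ((u⁻¹ : Rˣ) : R) * (⇑O.σ)^[κ] h0))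
          * (O.D ^ (O.ord P - O.ord T) * T)) j = 0 := by
        intro j hj
        rw [hXcoeff, hDTtop j (by omega), mul_zero]
      have hXn : O.coeff (O.ι (φ (C ((u⁻¹ : Rˣ) : R) * (⇑O.σ)^[κ] h0))
          * (O.D ^ (O.ord P - O.ord T) * T)) (O.ord P) = φ (C a * t) := by
        rw [hXcoeff, hDTcoeff', ← map_mul]
        congr 1
        rw [O.it_mul, O.it_C, ← hkey]
        ring
      have hcstP : ∀ j, O.coeff (O.cst a * P) j = φ (C a) * O.coeff P j :=
        fun j => O.coeff_smul _ _ j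
      have hP'top : ∀ j, n' < j → O.coeff (O.cst a * P
          - O.ι (φ (C ((u⁻¹ : Rˣ) : R) * (⇑O.σ)^[κ] h0))
            * (O.D ^ (O.ord P - O.ord T) * T)) j = 0 := by
        intro j hj
        rw [O.coeff_sub, hcstP]
        rcases eq_or_lt_of_le (show O.ord P ≤ j by omega) with hjn | hjn
        · rw [← hjn, hXn, ht, ← map_mul]
          exact sub_self _
        · rw [O.coeff_eq_zero_of_lt P hjn, hXtop j hjn, mul_zero, sub_zero]
      have hP'B : O.InB (O.cst a * P - O.ι (φ (C ((u⁻¹ : Rˣ) : R) * (⇑O.σ)^[κ] h0))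
          * (O.D ^ (O.ord P - O.ord T) * T)) := by
        intro j
        obtain ⟨w1, hw1⟩ := hPB j
        obtain ⟨w2, hw2⟩ := hDTB j
        refine ⟨C a * w1 - (C ((u⁻¹ : Rˣ) : R) * (⇑O.σ)^[κ] h0) * w2, ?_⟩
        rw [O.coeff_sub, hcstP, hXcoeff, hw1, hw2, ← map_mul, ← map_mul, ← map_sub]
      have hP'cont : (O.cst a * P - O.ι (φ (C ((u⁻¹ : Rˣ) : R) * (⇑O.σ)^[κ] h0))
          * (O.D ^ (O.ord P - O.ord T) * T)) ∈ O.cont L := by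
        refine ⟨hP'B, O.cst a * Q - O.ι (φ (C ((u⁻¹ : Rˣ) : R) * (⇑O.σ)^[κ] h0))
          * (O.D ^ (O.ord P - O.ord T) * QT), ?_⟩
        rw [hPQ, hTQT]
        simp only [sub_mul, mul_assoc]
      obtain ⟨jj, hjj⟩ := ih _ hP'cont (O.ord_le _ hP'top)
      refine ⟨jj + 1, ?_⟩
      have hXmem : O.cst a ^ jj * (O.ι (φ (C ((u⁻¹ : Rˣ) : R) * (⇑O.σ)^[κ] h0))
          * (O.D ^ (O.ord P - O.ord T) * T)) ∈ O.LIdeal (O.M L k) := by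
        have h1 : O.cst a ^ jj * (O.ι (φ (C ((u⁻¹ : Rˣ) : R) * (⇑O.σ)^[κ] h0))
            * (O.D ^ (O.ord P - O.ord T) * T))
            = (O.ι (φ (C (a ^ jj) * (C ((u⁻¹ : Rˣ) : R) * (⇑O.σ)^[κ] h0)))
              * O.D ^ (O.ord P - O.ord T)) * T := by
          rw [O.cst_pow, ← mul_assoc, ← map_mul, ← map_mul, ← mul_assoc]
        rw [h1]
        exact O.LIdeal_single (O.InB_monomial _ _) hTk
      have hsum : O.cst a ^ (jj + 1) * P
          = O.cst a ^ jj * (O.cst a * P - O.ι (φ (C ((u⁻¹ : Rˣ) : R) * (⇑O.σ)^[κ] h0))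
              * (O.D ^ (O.ord P - O.ord T) * T))
            + O.cst a ^ jj * (O.ι (φ (C ((u⁻¹ : Rˣ) : R) * (⇑O.σ)^[κ] h0))
              * (O.D ^ (O.ord P - O.ord T) * T)) := by
        rw [mul_sub, sub_add_cancel, ← mul_assoc, ← pow_succ]
      rw [hsum]
      exact O.LIdeal_add hjj hXmem
  -- the two inclusions
  apply Set.Subset.antisymm
  · intro P hP
    exact ⟨hP.1, main (O.ord P) P hP le_rfl⟩
  · rintro P ⟨hPB, i, hmem⟩
    obtain ⟨nn, co, ss, hco, hss, hsum⟩ := hmem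
    choose QQ hQQ using fun j => (hss j).1.2
    have hfac : O.cst a ^ i * P = (∑ j, co j * QQ j) * L := by
      rw [hsum, Finset.sum_mul]
      exact Finset.sum_congr rfl fun j _ => by rw [hQQ j, ← mul_assoc]
    have hCa : (φ (C a) : QX R) ≠ 0 := fun h => ha0 (C_eq_zero.mp (hφinj (by rw [h, map_zero])))
    have hPP : P = O.ι ((φ (C a))⁻¹ ^ i) * (O.cst a ^ i * P) := by
      rw [O.cst_pow', ← mul_assoc, ← map_mul, ← mul_pow, inv_mul_cancel₀ hCa, one_pow,
        map_one, one_mul]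
    exact ⟨hPB, O.ι ((φ (C a))⁻¹ ^ i) * (∑ j, co j * QQ j), by rw [hPP, hfac, ← mul_assoc]⟩
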